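/- arXiv:2212.10959 — 3 statements merged into one kernel-verified Lean document; each statement's English description precedes it below -/
import Mathlib

section
/- (Population double robustness for a known policy, Section 4.1, type B.) Suppose the weight functions w(a) are known (ŵ = w) and the weight functions do not depend on the data distribution (φ = φ̂ = 0), so that the plug-in influence-function functional is φ̂_unc := ∑_{a∈α} ⟨w(a), Ĝ(a)⟩ + ⟨w(A), Y − Ĝ(A)⟩ / Ĥ(A). If either Ĝ(a) = G(a) μ-a.e. for all a ∈ α, or Ĥ(a) = H(a) μ-a.e. for all a ∈ α, then E[φ̂_unc] = Ψ(w). -/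
open MeasureTheory RealInnerProductSpace

/-- Cluster-level treatment probability `H(a) = P(A = a | m) = μ[1_{A=a}|m]`. -/
noncomputable def condH {Ω α : Type*} {mΩ : MeasurableSpace Ω} [DecidableEq α]
    (μ : Measure Ω) (m : MeasurableSpace Ω) (A : Ω → α) (a : α) : Ω → ℝ :=
  μ[fun ω => if A ω = a then (1:ℝ) else 0|m]

/-- Cluster-level outcome regression `G(a) = μ[Y·1_{A=a}|m] / H(a)` (componentwise). -/
noncomputable def condG {Ω α : Type*} {mΩ : MeasurableSpace Ω} [DecidableEq α] {n : ℕ}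
    (μ : Measure Ω) (m : MeasurableSpace Ω) (A : Ω → α)
    (Y : Ω → EuclideanSpace ℝ (Fin n)) (a : α) : Ω → EuclideanSpace ℝ (Fin n) :=
  fun ω => (condH μ m A a ω)⁻¹ •
    (μ[fun ω' => (if A ω' = a then (1:ℝ) else 0) • Y ω'|m]) ω

/-- Numerator of `condG`. -/
noncomputable def condV {Ω α : Type*} {mΩ : MeasurableSpace Ω} [DecidableEq α] {n : ℕ}
    (μ : Measure Ω) (m : MeasurableSpace Ω) (A : Ω → α)
    (Y : Ω → EuclideanSpace ℝ (Fin n)) (a : α) : Ω → EuclideanSpace ℝ (Fin n) :=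
  μ[fun ω' => (if A ω' = a then (1:ℝ) else 0) • Y ω'|m]

section Aux

variable {Ω : Type*} {mΩ : MeasurableSpace Ω} {μ : Measure Ω} [IsProbabilityMeasure μ]
  {m : MeasurableSpace Ω}

lemma aux_coord_le_norm {n : ℕ} (x : EuclideanSpace ℝ (Fin n)) (i : Fin n) : |x i| ≤ ‖x‖ := by
  rw [EuclideanSpace.norm_eq, ← Real.sqrt_sq_eq_abs]
  apply Real.sqrt_le_sqrt
  calc (x i)^2 = ‖x i‖^2 := by rw [Real.norm_eq_abs, sq_abs]
    _ ≤ ∑ j, ‖x j‖^2 := Finset.single_le_sum (f := fun j => ‖x j‖^2)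
        (fun j _ => sq_nonneg _) (Finset.mem_univ i)

lemma aux_integral_pullout (hm : m ≤ mΩ) {φ f : Ω → ℝ}
    (hφ : StronglyMeasurable[m] φ) (hf : Integrable f μ) (hφf : Integrable (φ * f) μ) :
    ∫ ω, φ ω * f ω ∂μ = ∫ ω, φ ω * (μ[f|m]) ω ∂μ := by
  have h := condExp_mul_of_stronglyMeasurable_left hφ hφf hf
  calc ∫ ω, φ ω * f ω ∂μ = ∫ ω, (φ * f) ω ∂μ := rfl
    _ = ∫ ω, (μ[φ * f|m]) ω ∂μ := (integral_condExp hm).symm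
    _ = ∫ ω, (φ * μ[f|m]) ω ∂μ := integral_congr_ae h
    _ = _ := rfl

lemma aux_condexp_coord (hm : m ≤ mΩ) {n : ℕ} {f : Ω → EuclideanSpace ℝ (Fin n)}
    (hf : Integrable f μ) (i : Fin n) :
    (fun ω => (μ[f|m]) ω i) =ᵐ[μ] μ[fun ω => f ω i|m] := by
  letI : MeasurableSpace Ω := mΩ
  have hL : Integrable (fun ω => f ω i) μ :=
    ContinuousLinearMap.integrable_comp (μ := μ) (EuclideanSpace.proj (𝕜 := ℝ) i) hf
  refine ae_eq_condExp_of_forall_setIntegral_eq hm hL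
    (fun s _ _ => (ContinuousLinearMap.integrable_comp (μ := μ) (EuclideanSpace.proj (𝕜 := ℝ) i) integrable_condExp).integrableOn) (fun s hs _ => ?_) ?_
  · have h1 : ∫ ω in s, (μ[f|m]) ω i ∂μ
        = EuclideanSpace.proj (𝕜 := ℝ) i (∫ ω in s, (μ[f|m]) ω ∂μ) :=
      ContinuousLinearMap.integral_comp_comm (EuclideanSpace.proj (𝕜 := ℝ) i) (integrable_condExp.integrableOn)
    have h2 : ∫ ω in s, f ω i ∂μ = EuclideanSpace.proj (𝕜 := ℝ) i (∫ ω in s, f ω ∂μ) :=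
      ContinuousLinearMap.integral_comp_comm (EuclideanSpace.proj (𝕜 := ℝ) i) hf.integrableOn
    rw [h1, h2, setIntegral_condExp hm hf hs]
  · exact (((EuclideanSpace.proj (𝕜 := ℝ) i).continuous.comp_stronglyMeasurable
      (stronglyMeasurable_condExp (m := m)))).aestronglyMeasurable

end Aux

section Key

variable {Ω : Type*} {mΩ : MeasurableSpace Ω} (μ : Measure Ω) [IsProbabilityMeasure μ]
  (m : MeasurableSpace Ω)
  {α : Type*} [DecidableEq α] [MeasurableSpace α] [MeasurableSingletonClass α] {n : ℕ}

/-- Integrability of the per-(a,i) influence summand. -/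
lemma int_s (hm : m ≤ mΩ)
    (A : Ω → α) (hA : Measurable[mΩ] A)
    (Y : Ω → EuclideanSpace ℝ (Fin n)) (hY : Measurable[mΩ] Y)
    (CY : ℝ) (hYb : ∀ ω, ‖Y ω‖ ≤ CY)
    (c : ℝ) (hc : 0 < c) (a : α)
    (w : Ω → EuclideanSpace ℝ (Fin n)) (hw : Measurable[m] w) (Cw : ℝ) (hwb : ∀ ω, ‖w ω‖ ≤ Cw)
    (Gh : Ω → EuclideanSpace ℝ (Fin n)) (hGh : Measurable[m] Gh) (CG : ℝ)
    (hGhb : ∀ ω, ‖Gh ω‖ ≤ CG)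
    (Hh : Ω → ℝ) (hHh : Measurable[m] Hh) (hHhc : ∀ᵐ ω ∂μ, c ≤ Hh ω) (i : Fin n) :
    Integrable (fun ω => w ω i * Gh ω i
        + (if A ω = a then (1:ℝ) else 0) * (w ω i * (Y ω i - Gh ω i)) / Hh ω) μ := by
  letI : MeasurableSpace Ω := mΩ
  have hwi : Measurable[m] fun ω => w ω i :=
    ((EuclideanSpace.proj (𝕜 := ℝ) i).continuous.measurable).comp hw
  have hGhi : Measurable[m] fun ω => Gh ω i :=
    ((EuclideanSpace.proj (𝕜 := ℝ) i).continuous.measurable).comp hGh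
  have hYi : Measurable fun ω => Y ω i :=
    ((EuclideanSpace.proj (𝕜 := ℝ) i).continuous.measurable).comp hY
  have hind : Measurable fun ω => if A ω = a then (1:ℝ) else 0 :=
    Measurable.ite (hA (measurableSet_singleton a)) measurable_const measurable_const
  have hmeas : Measurable fun ω => w ω i * Gh ω i
      + (if A ω = a then (1:ℝ) else 0) * (w ω i * (Y ω i - Gh ω i)) / Hh ω := by
    exact ((hwi.mono hm le_rfl).mul (hGhi.mono hm le_rfl)).add
      ((hind.mul (((hwi.mono hm le_rfl)).mul (hYi.sub (hGhi.mono hm le_rfl)))).div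
        (hHh.mono hm le_rfl))
  refine (integrable_const (|Cw * CG| + Cw * (CY + CG) / c)).mono' hmeas.aestronglyMeasurable ?_
  filter_upwards [hHhc] with ω hHhO
  have h0c : (0:ℝ) < Hh ω := lt_of_lt_of_le hc hHhO
  have hwi' : |w ω i| ≤ Cw := le_trans (aux_coord_le_norm _ i) (hwb ω)
  have hGhi' : |Gh ω i| ≤ CG := le_trans (aux_coord_le_norm _ i) (hGhb ω)
  have hYi' : |Y ω i| ≤ CY := le_trans (aux_coord_le_norm _ i) (hYb ω)
  have hCw0 : 0 ≤ Cw := le_trans (abs_nonneg _) hwi'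
  have hCG0 : 0 ≤ CG := le_trans (abs_nonneg _) hGhi'
  have hCY0 : 0 ≤ CY := le_trans (abs_nonneg _) hYi'
  rw [Real.norm_eq_abs]
  refine le_trans (abs_add_le _ _) (add_le_add ?_ ?_)
  · rw [abs_mul]
    exact le_trans (mul_le_mul hwi' hGhi' (abs_nonneg _) hCw0) (le_abs_self _)
  · rw [abs_div, abs_mul, abs_mul]
    have hnum : |if A ω = a then (1:ℝ) else 0| * (|w ω i| * |Y ω i - Gh ω i|)
        ≤ 1 * (Cw * (CY + CG)) := by
      refine mul_le_mul ?_ ?_ (by positivity) zero_le_one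
      · split <;> simp
      · refine mul_le_mul hwi' ?_ (abs_nonneg _) hCw0
        exact le_trans (abs_sub _ _) (add_le_add hYi' hGhi')
    rw [one_mul] at hnum
    have hden : c ≤ |Hh ω| := le_trans hHhO (le_abs_self _)
    calc |if A ω = a then (1:ℝ) else 0| * (|w ω i| * |Y ω i - Gh ω i|) / |Hh ω|
        ≤ (Cw * (CY + CG)) / c := by
          apply div_le_div₀ (by positivity) hnum hc hden
      _ = Cw * (CY + CG) / c := rfl

/-- Integrability of the per-(a,i) target summand. -/
lemma int_rhs (hm : m ≤ mΩ)
    (A : Ω → α)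
    (Y : Ω → EuclideanSpace ℝ (Fin n))
    (c : ℝ) (hc : 0 < c) (a : α) (hHa : ∀ᵐ ω ∂μ, c ≤ condH μ m A a ω)
    (w : Ω → EuclideanSpace ℝ (Fin n)) (hw : Measurable[m] w) (Cw : ℝ) (hwb : ∀ ω, ‖w ω‖ ≤ Cw)
    (i : Fin n) :
    Integrable (fun ω => w ω i * ((condH μ m A a ω)⁻¹ * condV μ m A Y a ω i)) μ := by
  letI : MeasurableSpace Ω := mΩ
  have hVsm : StronglyMeasurable[mΩ] (condV μ m A Y a) :=
    (stronglyMeasurable_condExp (m := m)).mono hm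
  have hVi : Measurable fun ω => condV μ m A Y a ω i :=
    ((EuclideanSpace.proj (𝕜 := ℝ) i).continuous.comp_stronglyMeasurable hVsm).measurable
  have hHsm : Measurable (condH μ m A a) :=
    ((stronglyMeasurable_condExp (m := m)).mono hm).measurable
  have hwi : Measurable fun ω => w ω i :=
    (((EuclideanSpace.proj (𝕜 := ℝ) i).continuous.measurable).comp hw).mono hm le_rfl
  have hmeas : Measurable fun ω => w ω i * ((condH μ m A a ω)⁻¹ * condV μ m A Y a ω i) :=
    hwi.mul (hHsm.inv.mul hVi)
  have hVint : Integrable (condV μ m A Y a) μ := integrable_condExp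
  refine ((hVint.norm.const_mul (Cw * c⁻¹)).mono' hmeas.aestronglyMeasurable ?_)
  filter_upwards [hHa] with ω hHω
  have h0 : (0:ℝ) < condH μ m A a ω := lt_of_lt_of_le hc hHω
  have hwi' : |w ω i| ≤ Cw := le_trans (aux_coord_le_norm _ i) (hwb ω)
  have hCw0 : 0 ≤ Cw := le_trans (abs_nonneg _) hwi'
  have hVi' : |condV μ m A Y a ω i| ≤ ‖condV μ m A Y a ω‖ := aux_coord_le_norm _ i
  have hinv : |(condH μ m A a ω)⁻¹| ≤ c⁻¹ := by
    rw [abs_of_pos (inv_pos.mpr h0)]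
    exact inv_anti₀ hc hHω
  rw [Real.norm_eq_abs, abs_mul, abs_mul]
  calc |w ω i| * (|(condH μ m A a ω)⁻¹| * |condV μ m A Y a ω i|)
      ≤ Cw * (c⁻¹ * ‖condV μ m A Y a ω‖) := by
        refine mul_le_mul hwi' (mul_le_mul hinv hVi' (abs_nonneg _) (by positivity))
          (by positivity) hCw0
    _ = Cw * c⁻¹ * ‖condV μ m A Y a ω‖ := by ring

end Key
section Key2

variable {Ω : Type*} {mΩ : MeasurableSpace Ω} (μ : Measure Ω) [IsProbabilityMeasure μ]
  (m : MeasurableSpace Ω)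
  {α : Type*} [DecidableEq α] [MeasurableSpace α] [MeasurableSingletonClass α] {n : ℕ}

set_option maxHeartbeats 1000000 in
lemma key_ai (hm : m ≤ mΩ)
    (A : Ω → α) (hA : Measurable[mΩ] A)
    (Y : Ω → EuclideanSpace ℝ (Fin n)) (hY : Measurable[mΩ] Y)
    (CY : ℝ) (hYb : ∀ ω, ‖Y ω‖ ≤ CY)
    (c : ℝ) (hc : 0 < c) (a : α) (hHa : ∀ᵐ ω ∂μ, c ≤ condH μ m A a ω)
    (w : Ω → EuclideanSpace ℝ (Fin n)) (hw : Measurable[m] w) (Cw : ℝ) (hwb : ∀ ω, ‖w ω‖ ≤ Cw)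
    (Gh : Ω → EuclideanSpace ℝ (Fin n)) (hGh : Measurable[m] Gh) (CG : ℝ)
    (hGhb : ∀ ω, ‖Gh ω‖ ≤ CG)
    (Hh : Ω → ℝ) (hHh : Measurable[m] Hh) (hHhc : ∀ᵐ ω ∂μ, c ≤ Hh ω)
    (hDR : (Gh =ᵐ[μ] condG μ m A Y a) ∨ (Hh =ᵐ[μ] condH μ m A a)) (i : Fin n) :
    ∫ ω, (w ω i * Gh ω i
        + (if A ω = a then (1:ℝ) else 0) * (w ω i * (Y ω i - Gh ω i)) / Hh ω) ∂μ
      = ∫ ω, w ω i * ((condH μ m A a ω)⁻¹ * condV μ m A Y a ω i) ∂μ := by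
  letI : MeasurableSpace Ω := mΩ
  -- measurability facts
  have hwi : Measurable[m] fun ω => w ω i :=
    ((EuclideanSpace.proj (𝕜 := ℝ) i).continuous.measurable).comp hw
  have hGhi : Measurable[m] fun ω => Gh ω i :=
    ((EuclideanSpace.proj (𝕜 := ℝ) i).continuous.measurable).comp hGh
  have hYi : Measurable fun ω => Y ω i :=
    ((EuclideanSpace.proj (𝕜 := ℝ) i).continuous.measurable).comp hY
  have hind : Measurable fun ω => if A ω = a then (1:ℝ) else 0 :=
    Measurable.ite (hA (measurableSet_singleton a)) measurable_const measurable_const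
  -- coordinate bounds
  have hwi' : ∀ ω, |w ω i| ≤ Cw := fun ω => le_trans (aux_coord_le_norm _ i) (hwb ω)
  have hGhi' : ∀ ω, |Gh ω i| ≤ CG := fun ω => le_trans (aux_coord_le_norm _ i) (hGhb ω)
  have hYi' : ∀ ω, |Y ω i| ≤ CY := fun ω => le_trans (aux_coord_le_norm _ i) (hYb ω)
  -- nonemptiness of Ω via the probability measure
  have hΩne : Nonempty Ω := by
    by_contra h
    rw [not_nonempty_iff] at h
    have : μ Set.univ = 0 := by simp [Set.univ_eq_empty_iff.mpr h]
    simp [measure_univ] at this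
  have hCw0 : 0 ≤ Cw := le_trans (abs_nonneg _) (hwi' Classical.ofNonempty)
  have hCG0 : 0 ≤ CG := le_trans (abs_nonneg _) (hGhi' Classical.ofNonempty)
  -- shorthand
  set φ : Ω → ℝ := fun ω => w ω i / Hh ω with hφdef
  set H : Ω → ℝ := condH μ m A a with hHdef
  set V : Ω → EuclideanSpace ℝ (Fin n) := condV μ m A Y a with hVdef
  have hφm : Measurable[m] φ := hwi.div hHh
  have hφsm : StronglyMeasurable[m] φ := hφm.stronglyMeasurable
  have hφbd : ∀ᵐ ω ∂μ, ‖φ ω‖ ≤ Cw / c := by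
    filter_upwards [hHhc] with ω hHhω
    rw [Real.norm_eq_abs, hφdef, abs_div]
    exact div_le_div₀ hCw0 (hwi' ω) hc (le_trans hHhω (le_abs_self _))
  -- integrable pieces
  have hindY_int : Integrable (fun ω => (if A ω = a then (1:ℝ) else 0) • Y ω) μ := by
    refine (integrable_const CY).mono'
      ((hind.aestronglyMeasurable).smul (hY.aestronglyMeasurable)) (ae_of_all _ fun ω => ?_)
    rw [norm_smul]
    calc ‖if A ω = a then (1:ℝ) else 0‖ * ‖Y ω‖ ≤ 1 * CY := by
          refine mul_le_mul ?_ (hYb ω) (norm_nonneg _) zero_le_one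
          rw [Real.norm_eq_abs]; split <;> simp
      _ = CY := one_mul _
  have hindYi_int : Integrable (fun ω => (if A ω = a then (1:ℝ) else 0) * Y ω i) μ := by
    refine (integrable_const CY).mono'
      ((hind.mul hYi).aestronglyMeasurable) (ae_of_all _ fun ω => ?_)
    rw [Real.norm_eq_abs, abs_mul]
    calc |if A ω = a then (1:ℝ) else 0| * |Y ω i| ≤ 1 * CY := by
          refine mul_le_mul ?_ (hYi' ω) (abs_nonneg _) zero_le_one
          split <;> simp
      _ = CY := one_mul _
  have hind_int : Integrable (fun ω => if A ω = a then (1:ℝ) else 0) μ := by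
    refine (integrable_const 1).mono' hind.aestronglyMeasurable (ae_of_all _ fun ω => ?_)
    rw [Real.norm_eq_abs]; split <;> simp
  set Nf : Ω → ℝ := μ[fun ω => (if A ω = a then (1:ℝ) else 0) * Y ω i|m] with hNdef
  -- coordinate of the vector conditional expectation
  have hViN : (fun ω => V ω i) =ᵐ[μ] Nf := by
    have h := aux_condexp_coord (μ := μ) hm hindY_int i
    have hfun : (fun ω => ((if A ω = a then (1:ℝ) else 0) • Y ω : EuclideanSpace ℝ (Fin n)) i)
        = fun ω => (if A ω = a then (1:ℝ) else 0) * Y ω i := by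
      funext ω; simp [smul_eq_mul]; split_ifs <;> simp
    rw [hfun] at h
    exact h
  -- the three pieces
  set f1 : Ω → ℝ := fun ω => w ω i * Gh ω i with hf1def
  set f2 : Ω → ℝ := fun ω => φ ω * ((if A ω = a then (1:ℝ) else 0) * Y ω i) with hf2def
  set f3 : Ω → ℝ := fun ω => (φ ω * Gh ω i) * (if A ω = a then (1:ℝ) else 0) with hf3def
  have hφGhbd : ∀ᵐ ω ∂μ, ‖φ ω * Gh ω i‖ ≤ Cw / c * CG := by
    filter_upwards [hφbd] with ω hφω
    rw [Real.norm_eq_abs, abs_mul]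
    refine mul_le_mul (by rw [Real.norm_eq_abs] at hφω; exact hφω) (hGhi' ω) (abs_nonneg _)
      (div_nonneg hCw0 hc.le)
  have hf1int : Integrable f1 μ := by
    refine (integrable_const (Cw * CG)).mono'
      (((hwi.mono hm le_rfl).mul (hGhi.mono hm le_rfl)).aestronglyMeasurable)
      (ae_of_all _ fun ω => ?_)
    rw [Real.norm_eq_abs, abs_mul]
    exact mul_le_mul (hwi' ω) (hGhi' ω) (abs_nonneg _) hCw0
  have hf2int : Integrable f2 μ :=
    Integrable.bdd_mul (c := Cw / c) hindYi_int
      ((hφm.mono hm le_rfl).aestronglyMeasurable) hφbd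
  have hf3int : Integrable f3 μ :=
    Integrable.bdd_mul (c := Cw / c * CG) hind_int
      (((hφm.mono hm le_rfl).mul (hGhi.mono hm le_rfl)).aestronglyMeasurable) hφGhbd
  -- pointwise split
  have hpt : (fun ω => w ω i * Gh ω i
      + (if A ω = a then (1:ℝ) else 0) * (w ω i * (Y ω i - Gh ω i)) / Hh ω)
      = fun ω => f1 ω + (f2 ω - f3 ω) := by
    funext ω
    simp only [hf1def, hf2def, hf3def, hφdef]
    ring
  -- pull-out steps
  have h2 : ∫ ω, f2 ω ∂μ = ∫ ω, φ ω * Nf ω ∂μ :=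
    aux_integral_pullout hm hφsm hindYi_int hf2int
  have h3 : ∫ ω, f3 ω ∂μ = ∫ ω, (φ ω * Gh ω i) * H ω ∂μ :=
    aux_integral_pullout hm (hφm.mul hGhi).stronglyMeasurable hind_int hf3int
  -- integrability of the condexp products
  have hφN_int : Integrable (fun ω => φ ω * Nf ω) μ :=
    Integrable.bdd_mul (c := Cw / c) integrable_condExp
      ((hφm.mono hm le_rfl).aestronglyMeasurable) hφbd
  have hφGH_int : Integrable (fun ω => (φ ω * Gh ω i) * H ω) μ :=
    Integrable.bdd_mul (c := Cw / c * CG) integrable_condExp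
      (((hφm.mono hm le_rfl).mul (hGhi.mono hm le_rfl)).aestronglyMeasurable) hφGhbd
  calc ∫ ω, (w ω i * Gh ω i
        + (if A ω = a then (1:ℝ) else 0) * (w ω i * (Y ω i - Gh ω i)) / Hh ω) ∂μ
      = ∫ ω, (f1 ω + (f2 ω - f3 ω)) ∂μ := by rw [hpt]
    _ = ∫ ω, f1 ω ∂μ + (∫ ω, f2 ω ∂μ - ∫ ω, f3 ω ∂μ) := by
        have hsub : Integrable (fun ω => f2 ω - f3 ω) μ := hf2int.sub hf3int
        rw [integral_add hf1int hsub, integral_sub hf2int hf3int]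
    _ = ∫ ω, f1 ω ∂μ + (∫ ω, φ ω * Nf ω ∂μ - ∫ ω, (φ ω * Gh ω i) * H ω ∂μ) := by
        rw [h2, h3]
    _ = ∫ ω, (f1 ω + (φ ω * Nf ω - (φ ω * Gh ω i) * H ω)) ∂μ := by
        have hsub : Integrable (fun ω => φ ω * Nf ω - (φ ω * Gh ω i) * H ω) μ :=
          hφN_int.sub hφGH_int
        rw [integral_add hf1int hsub, integral_sub hφN_int hφGH_int]
    _ = ∫ ω, w ω i * ((H ω)⁻¹ * Nf ω) ∂μ := by
        refine integral_congr_ae ?_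
        rcases hDR with hG | hHH
        · have hGi : ∀ᵐ ω ∂μ, Gh ω i = (H ω)⁻¹ * V ω i := by
            filter_upwards [hG] with ω h
            have h' := congrArg (fun x : EuclideanSpace ℝ (Fin n) => x i) h
            simpa [condG, condV, smul_eq_mul, hHdef, hVdef] using h'
          filter_upwards [hHa, hHhc, hGi, hViN] with ω h1 hh2 h3' h4
          have hne : H ω ≠ 0 := (lt_of_lt_of_le hc h1).ne'
          have hhne : Hh ω ≠ 0 := (lt_of_lt_of_le hc hh2).ne'
          simp only [hf1def, hφdef]
          rw [h3', h4]
          field_simp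
          ring
        · filter_upwards [hHa, hHH] with ω h1 h3'
          have hne : H ω ≠ 0 := (lt_of_lt_of_le hc h1).ne'
          simp only [hf1def, hφdef]
          rw [h3']
          field_simp
          ring
    _ = ∫ ω, w ω i * ((H ω)⁻¹ * V ω i) ∂μ := by
        refine integral_congr_ae ?_
        filter_upwards [hViN] with ω h4
        rw [h4]

end Key2

/-- (Population double robustness for a known policy, Section 4.1, type B.)
For known weight functions (`ŵ = w`, `φ = φ̂ = 0`), the plug-in
influence-function functional
`φ̂_unc = ∑_a ⟨w(a), Ĝ(a)⟩ + ⟨w(A), Y − Ĝ(A)⟩/Ĥ(A)` satisfies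
`E[φ̂_unc] = Ψ(w)` as soon as either `Ĝ(a) = G(a)` a.e. for all `a`, or
`Ĥ(a) = H(a)` a.e. for all `a`. -/
theorem stmt5 {Ω : Type*} {mΩ : MeasurableSpace Ω}
    (μ : Measure Ω) [IsProbabilityMeasure μ]
    (m : MeasurableSpace Ω) (hm : m ≤ mΩ)
    {α : Type*} [Fintype α] [DecidableEq α] [MeasurableSpace α] [MeasurableSingletonClass α]
    {n : ℕ}
    (A : Ω → α) (hA : Measurable[mΩ] A)
    (Y : Ω → EuclideanSpace ℝ (Fin n)) (hY : Measurable[mΩ] Y)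
    (CY : ℝ) (hYb : ∀ ω, ‖Y ω‖ ≤ CY)
    -- positivity of the cluster-level treatment probability
    (c : ℝ) (hc : 0 < c)
    (hH : ∀ a : α, ∀ᵐ ω ∂μ, c ≤ condH μ m A a ω)
    -- bounded m-measurable weight functions
    (w : α → Ω → EuclideanSpace ℝ (Fin n)) (hw : ∀ a, Measurable[m] (w a))
    (Cw : ℝ) (hwb : ∀ a ω, ‖w a ω‖ ≤ Cw)
    -- fixed bounded m-measurable nuisance estimates
    (Gh : α → Ω → EuclideanSpace ℝ (Fin n)) (hGh : ∀ a, Measurable[m] (Gh a))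
    (CG : ℝ) (hGhb : ∀ a ω, ‖Gh a ω‖ ≤ CG)
    (Hh : α → Ω → ℝ) (hHh : ∀ a, Measurable[m] (Hh a))
    (hHhc : ∀ a : α, ∀ᵐ ω ∂μ, c ≤ Hh a ω) (hHhb : ∀ a ω, Hh a ω ≤ 1)
    -- double robustness: either the outcome regression or the treatment
    -- probability is consistently estimated
    (hDR : (∀ a : α, Gh a =ᵐ[μ] condG μ m A Y a)
        ∨ (∀ a : α, Hh a =ᵐ[μ] condH μ m A a)) :
    ∫ ω, ((∑ a, ⟪w a ω, Gh a ω⟫)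
        + ⟪w (A ω) ω, Y ω - Gh (A ω) ω⟫ / Hh (A ω) ω) ∂μ
      = ∫ ω, ∑ a, ⟪w a ω, condG μ m A Y a ω⟫ ∂μ := by
  letI : MeasurableSpace Ω := mΩ
  have hSint : ∀ (a : α) (i : Fin n), Integrable (fun ω => w a ω i * Gh a ω i
      + (if A ω = a then (1:ℝ) else 0) * (w a ω i * (Y ω i - Gh a ω i)) / Hh a ω) μ :=
    fun a i => int_s μ m hm A hA Y hY CY hYb c hc a (w a) (hw a) Cw (hwb a)
      (Gh a) (hGh a) CG (hGhb a) (Hh a) (hHh a) (hHhc a) i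
  have hRint : ∀ (a : α) (i : Fin n),
      Integrable (fun ω => w a ω i * ((condH μ m A a ω)⁻¹ * condV μ m A Y a ω i)) μ :=
    fun a i => int_rhs μ m hm A Y c hc a (hH a) (w a) (hw a) Cw (hwb a) i
  have hLfun : (fun ω => (∑ a, ⟪w a ω, Gh a ω⟫)
        + ⟪w (A ω) ω, Y ω - Gh (A ω) ω⟫ / Hh (A ω) ω)
      = fun ω => ∑ a, ∑ i, (w a ω i * Gh a ω i
        + (if A ω = a then (1:ℝ) else 0) * (w a ω i * (Y ω i - Gh a ω i)) / Hh a ω) := by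
    funext ω
    have hpick : ⟪w (A ω) ω, Y ω - Gh (A ω) ω⟫ / Hh (A ω) ω
        = ∑ a, (if A ω = a then (1:ℝ) else 0)
            * (⟪w a ω, Y ω - Gh a ω⟫ / Hh a ω) := by
      symm
      calc ∑ a, (if A ω = a then (1:ℝ) else 0) * (⟪w a ω, Y ω - Gh a ω⟫ / Hh a ω)
          = ∑ a, (if A ω = a then ⟪w a ω, Y ω - Gh a ω⟫ / Hh a ω else 0) :=
            Finset.sum_congr rfl fun a _ => by split <;> simp
        _ = ⟪w (A ω) ω, Y ω - Gh (A ω) ω⟫ / Hh (A ω) ω := by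
            rw [Finset.sum_ite_eq]; simp
    rw [hpick, ← Finset.sum_add_distrib]
    refine Finset.sum_congr rfl fun a _ => ?_
    rw [Finset.sum_add_distrib]
    congr 1
    · simp [PiLp.inner_apply, mul_comm]
    split_ifs <;> simp [Finset.sum_div, PiLp.inner_apply, mul_comm]
  have hRfun : (fun ω => ∑ a, ⟪w a ω, condG μ m A Y a ω⟫)
      = fun ω => ∑ a, ∑ i, w a ω i * ((condH μ m A a ω)⁻¹ * condV μ m A Y a ω i) := by
    funext ω
    refine Finset.sum_congr rfl fun a _ => ?_
    rw [PiLp.inner_apply]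
    refine Finset.sum_congr rfl fun i _ => ?_
    simp [RCLike.inner_apply, conj_trivial, condG, condV, PiLp.smul_apply, smul_eq_mul]
    ring
  rw [hLfun, hRfun]
  rw [integral_finset_sum _ (fun a _ => integrable_finset_sum _ (fun i _ => hSint a i)),
    integral_finset_sum _ (fun a _ => integrable_finset_sum _ (fun i _ => hRint a i))]
  refine Finset.sum_congr rfl fun a _ => ?_
  rw [integral_finset_sum _ (fun i _ => hSint a i),
    integral_finset_sum _ (fun i _ => hRint a i)]
  refine Finset.sum_congr rfl fun i _ => ?_
  have hDR' : (Gh a =ᵐ[μ] condG μ m A Y a) ∨ (Hh a =ᵐ[μ] condH μ m A a) := by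
    rcases hDR with h | h
    · exact Or.inl (h a)
    · exact Or.inr (h a)
  exact key_ai μ m hm A hA Y hY CY hYb c hc a (hH a) (w a) (hw a) Cw (hwb a)
    (Gh a) (hGh a) CG (hGhb a) (Hh a) (hHh a) (hHhc a) hDR' i
end

section
/- (Second-order product expansion bound, the multilinear von Mises remainder used in Section B.2.) Let n ≥ 1 and let a_1,…,a_n, b_1,…,b_n ∈ [0, 1]. Then |∏_{i=1}^n a_i − ∏_{i=1}^n b_i − ∑_{l=1}^n (∏_{i≠l} a_i)·(a_l − b_l)| ≤ 2^n · ∑_{i=1}^n (a_i − b_i)². -/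
open Finset

lemma stmt8_aux {ι : Type*} [DecidableEq ι] (a b : ι → ℝ)
    (ha : ∀ i, a i ∈ Set.Icc (0:ℝ) 1) (hb : ∀ i, b i ∈ Set.Icc (0:ℝ) 1)
    (s : Finset ι) :
    |(∏ i ∈ s, a i) - (∏ i ∈ s, b i) -
        ∑ l ∈ s, (∏ i ∈ s.erase l, a i) * (a l - b l)|
      ≤ 2 ^ s.card * ∑ i ∈ s, (a i - b i) ^ 2 := by
  classical
  induction s using Finset.induction_on with
  | empty => simp
  | @insert x s hx ih =>
    have hprod_mem : ∀ t : Finset ι, (∏ i ∈ t, a i) ∈ Set.Icc (0:ℝ) 1 := by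
      intro t
      constructor
      · exact Finset.prod_nonneg (fun i _ => (ha i).1)
      · exact Finset.prod_le_one (fun i _ => (ha i).1) (fun i _ => (ha i).2)
    set A := ∏ i ∈ s, a i with hA
    set B := ∏ i ∈ s, b i with hB
    set S := ∑ l ∈ s, (∏ i ∈ s.erase l, a i) * (a l - b l) with hS
    have hprodA : ∏ i ∈ insert x s, a i = a x * A := Finset.prod_insert hx
    have hprodB : ∏ i ∈ insert x s, b i = b x * B := Finset.prod_insert hx
    have hsum : ∑ l ∈ insert x s, (∏ i ∈ (insert x s).erase l, a i) * (a l - b l)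
        = A * (a x - b x) + a x * S := by
      rw [Finset.sum_insert hx, Finset.erase_insert hx]
      congr 1
      rw [hS, Finset.mul_sum]
      apply Finset.sum_congr rfl
      intro l hl
      have hxl : x ≠ l := fun h => hx (h ▸ hl)
      rw [Finset.erase_insert_of_ne hxl,
        Finset.prod_insert (fun h => hx (Finset.mem_of_mem_erase h))]
      ring
    have key : (∏ i ∈ insert x s, a i) - (∏ i ∈ insert x s, b i) -
        ∑ l ∈ insert x s, (∏ i ∈ (insert x s).erase l, a i) * (a l - b l)
        = b x * (A - B - S) - (a x - b x) * S := by
      rw [hprodA, hprodB, hsum]; ring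
    rw [key]
    have hSbound : |S| ≤ ∑ l ∈ s, |a l - b l| := by
      refine (Finset.abs_sum_le_sum_abs _ _).trans ?_
      apply Finset.sum_le_sum
      intro l hl
      rw [abs_mul]
      have h1 := hprod_mem (s.erase l)
      calc |∏ i ∈ s.erase l, a i| * |a l - b l|
          ≤ 1 * |a l - b l| := by
            apply mul_le_mul_of_nonneg_right _ (abs_nonneg _)
            rw [abs_of_nonneg h1.1]; exact h1.2
        _ = |a l - b l| := one_mul _
    have hb1 : |b x| ≤ 1 := by
      rw [abs_of_nonneg (hb x).1]; exact (hb x).2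
    have h2 : |(a x - b x) * S| ≤ (1/2) * ∑ l ∈ s, (a l - b l)^2
        + (s.card / 2 : ℝ) * (a x - b x)^2 := by
      rw [abs_mul]
      calc |a x - b x| * |S| ≤ |a x - b x| * ∑ l ∈ s, |a l - b l| :=
            mul_le_mul_of_nonneg_left hSbound (abs_nonneg _)
        _ = ∑ l ∈ s, |a x - b x| * |a l - b l| := Finset.mul_sum _ _ _
        _ ≤ ∑ l ∈ s, ((a l - b l)^2 / 2 + (a x - b x)^2 / 2) := by
            apply Finset.sum_le_sum
            intro l hl
            nlinarith [sq_abs (a x - b x), sq_abs (a l - b l), sq_nonneg (|a x - b x| - |a l - b l|)]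
        _ = (1/2) * ∑ l ∈ s, (a l - b l)^2 + (s.card / 2 : ℝ) * (a x - b x)^2 := by
            rw [Finset.sum_add_distrib, Finset.sum_const, nsmul_eq_mul, ← Finset.sum_div]
            ring
    have h1 : |b x * (A - B - S)| ≤ 2 ^ s.card * ∑ i ∈ s, (a i - b i) ^ 2 := by
      rw [abs_mul]
      calc |b x| * |A - B - S| ≤ 1 * |A - B - S| :=
            mul_le_mul_of_nonneg_right hb1 (abs_nonneg _)
        _ = |A - B - S| := one_mul _
        _ ≤ _ := ih
    have htotal := (abs_sub _ _).trans (add_le_add h1 h2)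
    rw [Finset.card_insert_of_notMem hx, Finset.sum_insert hx]
    have hcard : (s.card : ℝ) / 2 ≤ 2 ^ (s.card + 1) := by
      have : (s.card : ℝ) ≤ 2 ^ s.card := by
        exact_mod_cast Nat.le_of_lt (Nat.lt_two_pow_self (n := s.card))
      have h2' : (2:ℝ) ^ s.card ≤ 2 ^ (s.card + 1) := by
        apply pow_le_pow_right₀ (by norm_num) (Nat.le_succ _)
      linarith
    have hsumnn : 0 ≤ ∑ i ∈ s, (a i - b i)^2 :=
      Finset.sum_nonneg (fun i _ => sq_nonneg _)
    have hpow : (2:ℝ)^s.card + 1/2 ≤ 2^(s.card+1) := by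
      have : (1:ℝ) ≤ 2 ^ s.card := one_le_pow₀ (by norm_num)
      rw [pow_succ]; linarith
    have hx2 : 0 ≤ (a x - b x)^2 := sq_nonneg _
    nlinarith [htotal]

/-- (Second-order product expansion bound, the multilinear von Mises remainder, Section B.2.)
For `a_i, b_i ∈ [0,1]`,
`|∏ a_i − ∏ b_i − ∑_l (∏_{i≠l} a_i)(a_l − b_l)| ≤ 2^n · ∑ (a_i − b_i)²`. -/
theorem stmt8 (n : ℕ) (hn : 1 ≤ n) (a b : Fin n → ℝ)
    (ha : ∀ i, a i ∈ Set.Icc (0:ℝ) 1) (hb : ∀ i, b i ∈ Set.Icc (0:ℝ) 1) :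
    |(∏ i, a i) - (∏ i, b i) -
        ∑ l, (∏ i ∈ Finset.univ.erase l, a i) * (a l - b l)|
      ≤ 2 ^ n * ∑ i, (a i - b i) ^ 2 := by
  have := stmt8_aux a b ha hb Finset.univ
  simpa using this
end

section
/- (Variance of the subsampling-approximated influence function, Theorem S2 of the supplement.) Let (Ω, F_Ω, μ) be a probability space, S a finite type, f : S → ℝ a probability mass function with f(s) > 0 for all s, and ν the measure on S with ν({s}) = f(s). Fix r ≥ 1 and let h : Ω × S → ℝ and l : Ω → ℝ be bounded measurable. On the product probability space Ω × S^r with measure μ ⊗ ν^{⊗r}, define W(ω, s) := (1/r)·∑_{q=1}^r h(ω, s_q)/f(s_q) + l(ω). Then Var(W) = Var_μ(ω ↦ ∑_{t∈S} h(ω, t) + l(ω)) + (1/r)·∫_Ω [∑_{t∈S} h(ω, t)²/f(t) − (∑_{t∈S} h(ω, t))²] dμ(ω). In particular, the variance of the subsampling-approximated estimator exceeds the variance of the exact functional ω ↦ ∑_{t} h(ω, t) + l(ω) by an additive term of order 1/r. -/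
open MeasureTheory ProbabilityTheory

private lemma stmt19_sum_pi_prod {r : ℕ} {S : Type*} [Fintype S] (F : Fin r → S → ℝ) :
    ∑ s : Fin r → S, ∏ q, F q (s q) = ∏ q, ∑ t, F q t := by
  classical
  rw [Finset.prod_univ_sum, Fintype.piFinset_univ]

private lemma stmt19_int {α : Type*} [MeasurableSpace α] {μ : Measure α} [IsFiniteMeasure μ]
    {φ : α → ℝ} (hm : Measurable φ) {D : ℝ} (hb : ∀ x, |φ x| ≤ D) : Integrable φ μ :=
  memLp_one_iff_integrable.mp <| MemLp.of_bound hm.aestronglyMeasurable D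
    (Filter.Eventually.of_forall fun x => by simpa [Real.norm_eq_abs] using hb x)

private lemma stmt19_mem2 {α : Type*} [MeasurableSpace α] {μ : Measure α} [IsFiniteMeasure μ]
    {φ : α → ℝ} (hm : Measurable φ) {D : ℝ} (hb : ∀ x, |φ x| ≤ D) : MemLp φ 2 μ :=
  MemLp.of_bound hm.aestronglyMeasurable D
    (Filter.Eventually.of_forall fun x => by simpa [Real.norm_eq_abs] using hb x)

section AuxSums
variable {r : ℕ} {S : Type*} [Fintype S]

private lemma stmt19_L1 (f : S → ℝ) (hfsum : ∑ s, f s = 1) :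
    ∑ s : Fin r → S, ∏ q, f (s q) = 1 := by
  rw [stmt19_sum_pi_prod]
  simp [hfsum]

private lemma stmt19_L2 (f : S → ℝ) (hfsum : ∑ s, f s = 1) (g : S → ℝ) (q₀ : Fin r) :
    ∑ s : Fin r → S, (∏ q, f (s q)) * g (s q₀) = ∑ t, f t * g t := by
  classical
  calc ∑ s : Fin r → S, (∏ q, f (s q)) * g (s q₀)
      = ∑ s : Fin r → S, ∏ q, (f (s q) * (if q = q₀ then g (s q) else 1)) := by
        refine Finset.sum_congr rfl fun s _ => ?_
        rw [Finset.prod_mul_distrib, Finset.prod_ite_eq' Finset.univ q₀ (fun q => g (s q))]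
        simp
    _ = ∏ q : Fin r, ∑ t, (f t * (if q = q₀ then g t else 1)) :=
        stmt19_sum_pi_prod (fun q t => f t * (if q = q₀ then g t else 1))
    _ = ∑ t, f t * g t := by
        have key2 : ∀ q : Fin r, (∑ t, f t * (if q = q₀ then g t else 1))
            = if q = q₀ then ∑ t, f t * g t else 1 := by
          intro q
          split_ifs with hq
          · rfl
          · simpa using hfsum
        simp_rw [key2]
        rw [Finset.prod_ite_eq' Finset.univ q₀ (fun _ => ∑ t, f t * g t)]
        simp

private lemma stmt19_L3 (f : S → ℝ) (hfsum : ∑ s, f s = 1) (g : S → ℝ) (q₀ q₁ : Fin r) :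
    ∑ s : Fin r → S, (∏ q, f (s q)) * (g (s q₀) * g (s q₁))
      = if q₀ = q₁ then ∑ t, f t * g t ^ 2 else (∑ t, f t * g t) * (∑ t, f t * g t) := by
  classical
  calc ∑ s : Fin r → S, (∏ q, f (s q)) * (g (s q₀) * g (s q₁))
      = ∑ s : Fin r → S, ∏ q,
          (f (s q) * (if q = q₀ then g (s q) else 1) * (if q = q₁ then g (s q) else 1)) := by
        refine Finset.sum_congr rfl fun s _ => ?_
        simp_rw [Finset.prod_mul_distrib]
        rw [Finset.prod_ite_eq' Finset.univ q₀ (fun q => g (s q)),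
          Finset.prod_ite_eq' Finset.univ q₁ (fun q => g (s q))]
        simp [mul_assoc]
    _ = ∏ q : Fin r, ∑ t,
          (f t * (if q = q₀ then g t else 1) * (if q = q₁ then g t else 1)) :=
        stmt19_sum_pi_prod
          (fun q t => f t * (if q = q₀ then g t else 1) * (if q = q₁ then g t else 1))
    _ = if q₀ = q₁ then ∑ t, f t * g t ^ 2 else (∑ t, f t * g t) * (∑ t, f t * g t) := by
        have key2 : ∀ q : Fin r,
            (∑ t, f t * (if q = q₀ then g t else 1) * (if q = q₁ then g t else 1))
            = if q = q₀ then (if q = q₁ then ∑ t, f t * g t ^ 2 else ∑ t, f t * g t)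
              else (if q = q₁ then ∑ t, f t * g t else 1) := by
          intro q
          split_ifs with h1 h2 h3
          · refine Finset.sum_congr rfl fun t _ => by ring
          · simp
          · simp
          · simpa using hfsum
        simp_rw [key2]
        by_cases hq : q₀ = q₁
        · subst hq
          rw [if_pos rfl]
          have key3 : ∀ q : Fin r,
              (if q = q₀ then (if q = q₀ then ∑ t, f t * g t ^ 2 else ∑ t, f t * g t)
                else (if q = q₀ then ∑ t, f t * g t else 1))
              = if q = q₀ then ∑ t, f t * g t ^ 2 else 1 := by
            intro q; split_ifs <;> rfl
          simp_rw [key3]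
          rw [Finset.prod_ite_eq' Finset.univ q₀ (fun _ => ∑ t, f t * g t ^ 2)]
          simp
        · rw [if_neg hq]
          have key3 : ∀ q : Fin r,
              (if q = q₀ then (if q = q₁ then ∑ t, f t * g t ^ 2 else ∑ t, f t * g t)
                else (if q = q₁ then ∑ t, f t * g t else 1))
              = (if q = q₀ then ∑ t, f t * g t else 1)
                * (if q = q₁ then ∑ t, f t * g t else 1) := by
            intro q
            split_ifs with h1 h2
            · exact absurd (h1 ▸ h2) hq
            · ring
            · ring
            · ring
          simp_rw [key3]
          rw [Finset.prod_mul_distrib,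
            Finset.prod_ite_eq' Finset.univ q₀ (fun _ => ∑ t, f t * g t),
            Finset.prod_ite_eq' Finset.univ q₁ (fun _ => ∑ t, f t * g t)]
          simp
end AuxSums

/-- (Variance of the subsampling-approximated influence function, Theorem S2.)
With `s_1, …, s_r` i.i.d. draws from the distribution `ν` on a finite set `S`
with positive mass function `f`, independent of the data `ω ∼ μ`, the
the importance-sampling approximation
`W(ω,s) = (1/r)∑_q h(ω,s_q)/f(s_q) + l(ω)` satisfies
`Var(W) = Var_μ(ω ↦ ∑_t h(ω,t) + l(ω))
  + (1/r)·∫ (∑_t h(ω,t)²/f(t) − (∑_t h(ω,t))²) dμ`. -/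
theorem stmt19 {Ω : Type*} [MeasurableSpace Ω] (μ : Measure Ω) [IsProbabilityMeasure μ]
    {S : Type*} [Fintype S] [MeasurableSpace S] [MeasurableSingletonClass S]
    (f : S → ℝ) (hf : ∀ s, 0 < f s) (hfsum : ∑ s, f s = 1)
    (ν : Measure S) [IsProbabilityMeasure ν]
    (hν : ∀ s, ν {s} = ENNReal.ofReal (f s))
    (r : ℕ) (hr : 1 ≤ r)
    (h : Ω → S → ℝ) (l : Ω → ℝ)
    (hhmeas : ∀ s, Measurable fun ω => h ω s) (hlmeas : Measurable l)
    (C : ℝ) (hhb : ∀ ω s, |h ω s| ≤ C) (hlb : ∀ ω, |l ω| ≤ C) :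
    variance
        (fun p : Ω × (Fin r → S) =>
          (1 / (r : ℝ)) * ∑ q, h p.1 (p.2 q) / f (p.2 q) + l p.1)
        (μ.prod (Measure.pi fun _ : Fin r => ν))
      = variance (fun ω => (∑ t, h ω t) + l ω) μ
        + (1 / (r : ℝ)) *
            ∫ ω, ((∑ t, (h ω t) ^ 2 / f t) - (∑ t, h ω t) ^ 2) ∂μ := by
  classical
  set π : Measure (Fin r → S) := Measure.pi fun _ : Fin r => ν with hπdef
  have hrpos : (0 : ℝ) < (r : ℝ) := by exact_mod_cast Nat.lt_of_lt_of_le Nat.zero_lt_one hr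
  have hrR : (r : ℝ) ≠ 0 := ne_of_gt hrpos
  have hΩne : Nonempty Ω := by
    by_contra hc
    rw [not_nonempty_iff] at hc
    have h1 : μ Set.univ = 1 := measure_univ
    rw [Set.univ_eq_empty_iff.mpr hc, measure_empty] at h1
    exact zero_ne_one h1
  have hC0 : 0 ≤ C := (abs_nonneg _).trans (hlb (Classical.arbitrary Ω))
  set M : ℝ := ∑ t : S, 1 / f t with hMdef
  have hM0 : 0 ≤ M := Finset.sum_nonneg fun t _ => div_nonneg zero_le_one (hf t).le
  have hMt : ∀ t, 1 / f t ≤ M :=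
    fun t => Finset.single_le_sum (f := fun t => 1 / f t)
      (fun t _ => div_nonneg zero_le_one (hf t).le) (Finset.mem_univ t)
  have hgb : ∀ (ω : Ω) (t : S), |h ω t / f t| ≤ C * M := by
    intro ω t
    rw [abs_div, abs_of_pos (hf t)]
    calc |h ω t| / f t ≤ C / f t := (div_le_div_iff_of_pos_right (hf t)).mpr (hhb ω t)
      _ = C * (1 / f t) := by ring
      _ ≤ C * M := by
          have := hMt t
          nlinarith [hMt t]
  -- measurability on Ω
  have hGmeas : Measurable fun ω => ∑ t, h ω t := Finset.measurable_sum _ fun t _ => hhmeas t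
  have hVmeas : Measurable fun ω => ∑ t, (h ω t) ^ 2 / f t :=
    Finset.measurable_sum _ fun t _ => ((hhmeas t).pow_const 2).div_const _
  have hmmeas : Measurable fun ω => (∑ t, h ω t) + l ω := hGmeas.add hlmeas
  -- bounds on Ω
  have hGb : ∀ ω, |∑ t, h ω t| ≤ (Fintype.card S) * C := by
    intro ω
    calc |∑ t, h ω t| ≤ ∑ t, |h ω t| := Finset.abs_sum_le_sum_abs _ _
      _ ≤ ∑ _t : S, C := Finset.sum_le_sum fun t _ => hhb ω t
      _ = (Fintype.card S) * C := by
          simp [Finset.sum_const, Finset.card_univ, nsmul_eq_mul]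
  have hVb : ∀ ω, |∑ t, (h ω t) ^ 2 / f t| ≤ C ^ 2 * M := by
    intro ω
    calc |∑ t, (h ω t) ^ 2 / f t| ≤ ∑ t, |(h ω t) ^ 2 / f t| := Finset.abs_sum_le_sum_abs _ _
      _ ≤ ∑ t, C ^ 2 * (1 / f t) := by
          refine Finset.sum_le_sum fun t _ => ?_
          have h1 : (h ω t) ^ 2 ≤ C ^ 2 := by
            rw [← sq_abs]
            exact pow_le_pow_left₀ (abs_nonneg _) (hhb ω t) 2
          calc |(h ω t) ^ 2 / f t| = (h ω t) ^ 2 / f t := by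
                rw [abs_div, abs_of_pos (hf t), abs_pow, sq_abs]
            _ ≤ C ^ 2 / f t := (div_le_div_iff_of_pos_right (hf t)).mpr h1
            _ = C ^ 2 * (1 / f t) := by ring
      _ = C ^ 2 * M := by rw [hMdef, Finset.mul_sum]
  have hmb : ∀ ω, |(∑ t, h ω t) + l ω| ≤ (Fintype.card S) * C + C :=
    fun ω => (abs_add_le _ _).trans (add_le_add (hGb ω) (hlb ω))
  have hF3b : ∀ ω, |(∑ t, (h ω t) ^ 2 / f t) - (∑ t, h ω t) ^ 2|
      ≤ C ^ 2 * M + ((Fintype.card S) * C) ^ 2 := by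
    intro ω
    rw [sub_eq_add_neg]
    refine (abs_add_le _ _).trans (add_le_add (hVb ω) ?_)
    rw [abs_neg, abs_pow]
    exact pow_le_pow_left₀ (abs_nonneg _) (hGb ω) 2
  -- the inner measure is a probability measure and integrals over it are finite sums
  have hπs : ∀ s : Fin r → S, (π {s}).toReal = ∏ q, f (s q) := by
    intro s
    have h1 : ({s} : Set (Fin r → S)) = Set.pi Set.univ fun q => {s q} :=
      (Set.univ_pi_singleton s).symm
    rw [hπdef, h1, Measure.pi_pi]
    simp_rw [hν]
    rw [← ENNReal.ofReal_prod_of_nonneg fun q _ => (hf _).le]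
    exact ENNReal.toReal_ofReal (Finset.prod_nonneg fun q _ => (hf _).le)
  have hint : ∀ φ : (Fin r → S) → ℝ,
      ∫ s, φ s ∂π = ∑ s : Fin r → S, (∏ q, f (s q)) * φ s := by
    intro φ
    rw [integral_fintype (Integrable.of_finite)]
    exact Finset.sum_congr rfl fun s _ => by rw [measureReal_def, hπs, smul_eq_mul]
  -- marginal sums
  have D1 : ∀ ω, ∑ s : Fin r → S, (∏ q, f (s q)) * (∑ q, h ω (s q) / f (s q))
      = (r : ℝ) * ∑ t, h ω t := by
    intro ω
    calc ∑ s : Fin r → S, (∏ q, f (s q)) * (∑ q, h ω (s q) / f (s q))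
        = ∑ s : Fin r → S, ∑ q, (∏ q', f (s q')) * (h ω (s q) / f (s q)) := by
          exact Finset.sum_congr rfl fun s _ => Finset.mul_sum _ _ _
      _ = ∑ q : Fin r, ∑ s : Fin r → S, (∏ q', f (s q')) * (h ω (s q) / f (s q)) :=
          Finset.sum_comm
      _ = ∑ _q : Fin r, ∑ t, f t * (h ω t / f t) :=
          Finset.sum_congr rfl fun q _ => stmt19_L2 f hfsum (fun t => h ω t / f t) q
      _ = ∑ _q : Fin r, ∑ t, h ω t := by
          refine Finset.sum_congr rfl fun q _ => Finset.sum_congr rfl fun t _ => ?_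
          field_simp [(hf t).ne']
      _ = (r : ℝ) * ∑ t, h ω t := by
          simp [Finset.sum_const, Finset.card_univ, nsmul_eq_mul]
  have D2 : ∀ ω, ∑ s : Fin r → S, (∏ q, f (s q)) *
        ((∑ q, h ω (s q) / f (s q)) * (∑ q, h ω (s q) / f (s q)))
      = (r : ℝ) * (∑ t, (h ω t) ^ 2 / f t)
        + ((r : ℝ) * (r : ℝ) - (r : ℝ)) * (∑ t, h ω t) ^ 2 := by
    intro ω
    have hfg : ∀ t, f t * (h ω t / f t) = h ω t := fun t => by
      field_simp [(hf t).ne']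
    have hfg2 : ∀ t, f t * (h ω t / f t) ^ 2 = (h ω t) ^ 2 / f t := fun t => by
      rw [div_pow, eq_div_iff (hf t).ne']
      field_simp [(hf t).ne']
    calc ∑ s : Fin r → S, (∏ q, f (s q)) *
          ((∑ q, h ω (s q) / f (s q)) * (∑ q, h ω (s q) / f (s q)))
        = ∑ s : Fin r → S, ∑ q₀ : Fin r, ∑ q₁ : Fin r,
            (∏ q, f (s q)) * ((h ω (s q₀) / f (s q₀)) * (h ω (s q₁) / f (s q₁))) := by
          refine Finset.sum_congr rfl fun s _ => ?_
          rw [Finset.sum_mul_sum]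
          rw [Finset.mul_sum]
          exact Finset.sum_congr rfl fun q₀ _ => Finset.mul_sum _ _ _
      _ = ∑ q₀ : Fin r, ∑ s : Fin r → S, ∑ q₁ : Fin r,
            (∏ q, f (s q)) * ((h ω (s q₀) / f (s q₀)) * (h ω (s q₁) / f (s q₁))) :=
          Finset.sum_comm
      _ = ∑ q₀ : Fin r, ∑ q₁ : Fin r, ∑ s : Fin r → S,
            (∏ q, f (s q)) * ((h ω (s q₀) / f (s q₀)) * (h ω (s q₁) / f (s q₁))) :=
          Finset.sum_congr rfl fun q₀ _ => Finset.sum_comm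
      _ = ∑ q₀ : Fin r, ∑ q₁ : Fin r,
            (if q₀ = q₁ then ∑ t, (h ω t) ^ 2 / f t
              else (∑ t, h ω t) * (∑ t, h ω t)) := by
          refine Finset.sum_congr rfl fun q₀ _ => Finset.sum_congr rfl fun q₁ _ => ?_
          rw [stmt19_L3 f hfsum (fun t => h ω t / f t) q₀ q₁]
          simp_rw [hfg, hfg2]
      _ = (r : ℝ) * (∑ t, (h ω t) ^ 2 / f t)
          + ((r : ℝ) * (r : ℝ) - (r : ℝ)) * (∑ t, h ω t) ^ 2 := by
          have inner : ∀ q₀ : Fin r, ∑ q₁ : Fin r,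
              (if q₀ = q₁ then (∑ t, (h ω t) ^ 2 / f t) else (∑ t, h ω t) * (∑ t, h ω t))
              = (r : ℝ) * ((∑ t, h ω t) * (∑ t, h ω t))
                + ((∑ t, (h ω t) ^ 2 / f t) - (∑ t, h ω t) * (∑ t, h ω t)) := by
            intro q₀
            have step : ∀ q₁ : Fin r,
                (if q₀ = q₁ then (∑ t, (h ω t) ^ 2 / f t) else (∑ t, h ω t) * (∑ t, h ω t))
                = (∑ t, h ω t) * (∑ t, h ω t)
                  + (if q₀ = q₁ then (∑ t, (h ω t) ^ 2 / f t)
                      - (∑ t, h ω t) * (∑ t, h ω t) else 0) := by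
              intro q₁; split_ifs <;> ring
            simp_rw [step]
            rw [Finset.sum_add_distrib, Finset.sum_ite_eq]
            simp [Finset.sum_const, Finset.card_univ, nsmul_eq_mul]
          simp_rw [inner]
          simp only [Finset.sum_const, Finset.card_univ, Fintype.card_fin, nsmul_eq_mul]
          ring
  -- inner integrals
  have E1 : ∀ ω, ∫ s, ((1 / (r : ℝ)) * ∑ q, h ω (s q) / f (s q) + l ω) ∂π
      = (∑ t, h ω t) + l ω := by
    intro ω
    rw [hint]
    have expand : ∀ s : Fin r → S,
        (∏ q, f (s q)) * ((1 / (r : ℝ)) * ∑ q, h ω (s q) / f (s q) + l ω)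
        = (1 / (r : ℝ)) * ((∏ q, f (s q)) * (∑ q, h ω (s q) / f (s q)))
          + l ω * (∏ q, f (s q)) := by
      intro s; ring
    simp_rw [expand]
    rw [Finset.sum_add_distrib, ← Finset.mul_sum, ← Finset.mul_sum, D1 ω,
      stmt19_L1 f hfsum]
    field_simp [hrR]
  have E2 : ∀ ω, ∫ s, ((1 / (r : ℝ)) * ∑ q, h ω (s q) / f (s q) + l ω) ^ 2 ∂π
      = ((∑ t, h ω t) + l ω) ^ 2
        + (1 / (r : ℝ)) * ((∑ t, (h ω t) ^ 2 / f t) - (∑ t, h ω t) ^ 2) := by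
    intro ω
    rw [hint]
    have expand : ∀ s : Fin r → S,
        (∏ q, f (s q)) * ((1 / (r : ℝ)) * ∑ q, h ω (s q) / f (s q) + l ω) ^ 2
        = (1 / (r : ℝ)) ^ 2 * ((∏ q, f (s q)) *
            ((∑ q, h ω (s q) / f (s q)) * (∑ q, h ω (s q) / f (s q))))
          + (2 * l ω * (1 / (r : ℝ))) * ((∏ q, f (s q)) * (∑ q, h ω (s q) / f (s q)))
          + (l ω) ^ 2 * (∏ q, f (s q)) := by
      intro s; ring
    simp_rw [expand]
    rw [Finset.sum_add_distrib, Finset.sum_add_distrib, ← Finset.mul_sum, ← Finset.mul_sum,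
      ← Finset.mul_sum, D2 ω, D1 ω, stmt19_L1 f hfsum]
    field_simp [hrR]
    ring
  -- measurability and bounds for W
  have hhm2 : Measurable fun p : Ω × S => h p.1 p.2 / f p.2 :=
    measurable_from_prod_countable_left fun t => by simpa using (hhmeas t).div_const (f t)
  have hWmeas : Measurable fun p : Ω × (Fin r → S) =>
      (1 / (r : ℝ)) * ∑ q, h p.1 (p.2 q) / f (p.2 q) + l p.1 := by
    apply Measurable.add
    · apply Measurable.const_mul
      apply Finset.measurable_sum
      intro q _
      exact hhm2.comp (measurable_fst.prodMk ((measurable_pi_apply q).comp measurable_snd))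
    · exact hlmeas.comp measurable_fst
  have hWb : ∀ p : Ω × (Fin r → S),
      |(1 / (r : ℝ)) * ∑ q, h p.1 (p.2 q) / f (p.2 q) + l p.1| ≤ C * M + C := by
    intro p
    refine (abs_add_le _ _).trans (add_le_add ?_ (hlb p.1))
    rw [abs_mul]
    have h1 : |∑ q, h p.1 (p.2 q) / f (p.2 q)| ≤ (r : ℝ) * (C * M) := by
      refine (Finset.abs_sum_le_sum_abs _ _).trans ?_
      refine (Finset.sum_le_sum fun q _ => hgb p.1 (p.2 q)).trans ?_
      simp [Finset.sum_const, Finset.card_univ, nsmul_eq_mul]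
    have h2 : |1 / (r : ℝ)| = 1 / (r : ℝ) := abs_of_pos (by positivity)
    rw [h2]
    calc (1 / (r : ℝ)) * |∑ q, h p.1 (p.2 q) / f (p.2 q)|
        ≤ (1 / (r : ℝ)) * ((r : ℝ) * (C * M)) := by gcongr
      _ = C * M := by field_simp
  have hWint : Integrable
      (fun p : Ω × (Fin r → S) => (1 / (r : ℝ)) * ∑ q, h p.1 (p.2 q) / f (p.2 q) + l p.1)
      (μ.prod π) := stmt19_int hWmeas hWb
  have hW2mem : MemLp
      (fun p : Ω × (Fin r → S) => (1 / (r : ℝ)) * ∑ q, h p.1 (p.2 q) / f (p.2 q) + l p.1) 2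
      (μ.prod π) := stmt19_mem2 hWmeas hWb
  have hW2int : Integrable
      (fun p : Ω × (Fin r → S) =>
        ((1 / (r : ℝ)) * ∑ q, h p.1 (p.2 q) / f (p.2 q) + l p.1) ^ 2)
      (μ.prod π) := by
    refine stmt19_int (hWmeas.pow_const 2) (D := (C * M + C) ^ 2) fun p => ?_
    rw [abs_pow]
    exact pow_le_pow_left₀ (abs_nonneg _) (hWb p) 2
  -- Fubini
  have hIW : ∫ p, ((1 / (r : ℝ)) * ∑ q, h p.1 (p.2 q) / f (p.2 q) + l p.1)
        ∂(μ.prod π)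
      = ∫ ω, ((∑ t, h ω t) + l ω) ∂μ := by
    rw [integral_prod _ hWint]
    exact integral_congr_ae (Filter.Eventually.of_forall fun ω => E1 ω)
  have hIW2 : ∫ p, ((1 / (r : ℝ)) * ∑ q, h p.1 (p.2 q) / f (p.2 q) + l p.1) ^ 2
        ∂(μ.prod π)
      = ∫ ω, (((∑ t, h ω t) + l ω) ^ 2
          + (1 / (r : ℝ)) * ((∑ t, (h ω t) ^ 2 / f t) - (∑ t, h ω t) ^ 2)) ∂μ := by
    rw [integral_prod _ hW2int]
    exact integral_congr_ae (Filter.Eventually.of_forall fun ω => E2 ω)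
  -- integrability on Ω
  have hmmem : MemLp (fun ω => (∑ t, h ω t) + l ω) 2 μ := stmt19_mem2 hmmeas hmb
  have hF2int : Integrable (fun ω => ((∑ t, h ω t) + l ω) ^ 2) μ := by
    refine stmt19_int (hmmeas.pow_const 2) (D := ((Fintype.card S) * C + C) ^ 2) fun ω => ?_
    rw [abs_pow]
    exact pow_le_pow_left₀ (abs_nonneg _) (hmb ω) 2
  have hF3int : Integrable (fun ω => (∑ t, (h ω t) ^ 2 / f t) - (∑ t, h ω t) ^ 2) μ :=
    stmt19_int (hVmeas.sub (hGmeas.pow_const 2)) hF3b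
  -- assemble
  rw [variance_eq_sub hW2mem, variance_eq_sub hmmem]
  simp only [Pi.pow_apply]
  rw [hIW, hIW2]
  rw [integral_add hF2int (hF3int.const_mul (1 / (r : ℝ))), integral_const_mul]
  ring
end
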